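/- For λ ~ GPD(τ, ξ) with τ > 0, ξ > 1/2, the density π(κ|τ,ξ) of κ = 1/(1+λ²) satisfies lim_{κ→1⁻} π(κ|τ,ξ) = ∞ and lim_{κ→0⁺} π(κ|τ,ξ) = ∞. -/
import Mathlib


open Real Filter Topology Set

/-- Density of the random shrinkage coefficient `κ = 1/(1+λ²)` from the GLT prior. -/
noncomputable def kappaPdf (τ ξ κ : ℝ) : ℝ :=
  (τ ^ (1 / ξ) / 2) * (κ ^ (1 / (2 * ξ) - 1) * (1 - κ) ^ (-(1 / 2) : ℝ)) /
    (τ * κ ^ ((1 : ℝ) / 2) + ξ * (1 - κ) ^ ((1 : ℝ) / 2)) ^ (1 + 1 / ξ)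

lemma rpow_neg_tendsto_atTop {c : ℝ} (hc : 0 < c) :
    Tendsto (fun x : ℝ => x ^ (-c)) (𝓝[>] (0:ℝ)) atTop := by
  have h := (tendsto_rpow_atTop hc).comp tendsto_inv_nhdsGT_zero
  refine h.congr' ?_
  filter_upwards [self_mem_nhdsWithin] with x hx
  have hx' : (0:ℝ) ≤ x := le_of_lt hx
  simp only [Function.comp_apply]
  rw [Real.rpow_neg hx', ← Real.inv_rpow hx']

/-- The GLT shrinkage-coefficient density has infinite spikes at both `κ = 0` and `κ = 1`. -/
theorem kappa_density_spikes (τ ξ : ℝ) (hτ : 0 < τ) (hξ : 1 / 2 < ξ) :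
    Tendsto (fun κ => kappaPdf τ ξ κ) (nhdsWithin 1 (Iio 1)) atTop ∧
    Tendsto (fun κ => kappaPdf τ ξ κ) (nhdsWithin 0 (Ioi 0)) atTop := by
  have hξ0 : (0:ℝ) < ξ := lt_trans (by norm_num) hξ
  constructor
  · -- κ → 1⁻
    have hmap : Tendsto (fun κ : ℝ => 1 - κ) (𝓝[<] (1:ℝ)) (𝓝[>] (0:ℝ)) := by
      apply tendsto_nhdsWithin_of_tendsto_nhds_of_eventually_within
      · have : Tendsto (fun κ : ℝ => 1 - κ) (𝓝 1) (𝓝 (1 - 1)) :=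
          (continuous_const.sub continuous_id).tendsto 1
        simpa using this.mono_left nhdsWithin_le_nhds
      · filter_upwards [self_mem_nhdsWithin] with x hx
        exact sub_pos.2 (mem_Iio.mp hx)
    have hblow : Tendsto (fun κ : ℝ => (1 - κ) ^ (-(1/2) : ℝ)) (𝓝[<] (1:ℝ)) atTop :=
      (rpow_neg_tendsto_atTop (by norm_num : (0:ℝ) < 1/2)).comp hmap
    -- the remaining factor tends to a positive constant
    set g : ℝ → ℝ := fun κ =>
      τ ^ (1/ξ) / 2 * κ ^ (1/(2*ξ) - 1) /
        (τ * κ ^ ((1:ℝ)/2) + ξ * (1 - κ) ^ ((1:ℝ)/2)) ^ (1 + 1/ξ) with hgdef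
    have hcont : ContinuousAt g 1 := by
      have h1 : ContinuousAt (fun κ : ℝ => κ ^ (1/(2*ξ) - 1)) 1 :=
        continuousAt_id.rpow_const (Or.inl one_ne_zero)
      have h2 : ContinuousAt (fun κ : ℝ => κ ^ ((1:ℝ)/2)) 1 :=
        continuousAt_id.rpow_const (Or.inl one_ne_zero)
      have h3 : ContinuousAt (fun κ : ℝ => (1 - κ) ^ ((1:ℝ)/2)) 1 :=
        ((continuous_const.sub continuous_id).continuousAt).rpow_const (Or.inr (by norm_num))
      have hb : ContinuousAt (fun κ : ℝ =>
          τ * κ ^ ((1:ℝ)/2) + ξ * (1 - κ) ^ ((1:ℝ)/2)) 1 :=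
        ((continuousAt_const.mul h2).add (continuousAt_const.mul h3))
      have hbne : (τ * (1:ℝ) ^ ((1:ℝ)/2) + ξ * (1 - 1) ^ ((1:ℝ)/2)) ≠ 0 := by
        simp [Real.one_rpow, Real.zero_rpow (by norm_num : ((1:ℝ)/2) ≠ 0)]
        positivity
      have hd : ContinuousAt (fun κ : ℝ =>
          (τ * κ ^ ((1:ℝ)/2) + ξ * (1 - κ) ^ ((1:ℝ)/2)) ^ (1 + 1/ξ)) 1 :=
        hb.rpow_const (Or.inl hbne)
      have hdne : ((τ * (1:ℝ) ^ ((1:ℝ)/2) + ξ * (1 - 1) ^ ((1:ℝ)/2)) ^ (1 + 1/ξ)) ≠ 0 := by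
        have : (0:ℝ) < τ * (1:ℝ) ^ ((1:ℝ)/2) + ξ * (1 - 1) ^ ((1:ℝ)/2) := by
          simp [Real.one_rpow, Real.zero_rpow (by norm_num : ((1:ℝ)/2) ≠ 0)]
          positivity
        exact ne_of_gt (Real.rpow_pos_of_pos this _)
      exact (continuousAt_const.mul h1).div hd hdne
    have hg1 : 0 < g 1 := by
      have hbase : τ * (1:ℝ) ^ ((1:ℝ)/2) + ξ * (1 - 1) ^ ((1:ℝ)/2) = τ := by
        simp [Real.one_rpow, Real.zero_rpow (by norm_num : ((1:ℝ)/2) ≠ 0)]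
      rw [hgdef]
      simp only [hbase, Real.one_rpow, sub_self]
      have h1 : (0:ℝ) < τ ^ (1/ξ) := Real.rpow_pos_of_pos hτ _
      have h2 : (0:ℝ) < τ ^ (1 + 1/ξ) := Real.rpow_pos_of_pos hτ _
      positivity
    have hgt : Tendsto g (𝓝[<] (1:ℝ)) (𝓝 (g 1)) :=
      hcont.tendsto.mono_left nhdsWithin_le_nhds
    have := hgt.pos_mul_atTop hg1 hblow
    refine this.congr fun κ => ?_
    simp only [hgdef, kappaPdf]
    ring
  · -- κ → 0⁺
    have hexp : 1/(2*ξ) - 1 = -(1 - 1/(2*ξ)) := by ring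
    have hexp_pos : (0:ℝ) < 1 - 1/(2*ξ) := by
      have : 1/(2*ξ) < 1 := by
        rw [div_lt_one (by positivity)]
        linarith
      linarith
    have hblow : Tendsto (fun κ : ℝ => κ ^ (1/(2*ξ) - 1)) (𝓝[>] (0:ℝ)) atTop := by
      rw [hexp]
      exact rpow_neg_tendsto_atTop hexp_pos
    set g : ℝ → ℝ := fun κ =>
      τ ^ (1/ξ) / 2 * (1 - κ) ^ (-(1/2) : ℝ) /
        (τ * κ ^ ((1:ℝ)/2) + ξ * (1 - κ) ^ ((1:ℝ)/2)) ^ (1 + 1/ξ) with hgdef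
    have hcont : ContinuousAt g 0 := by
      have h1 : ContinuousAt (fun κ : ℝ => (1 - κ) ^ (-(1/2) : ℝ)) 0 :=
        ((continuous_const.sub continuous_id).continuousAt).rpow_const
          (Or.inl (by norm_num))
      have h2 : ContinuousAt (fun κ : ℝ => κ ^ ((1:ℝ)/2)) 0 :=
        continuousAt_id.rpow_const (Or.inr (by norm_num))
      have h3 : ContinuousAt (fun κ : ℝ => (1 - κ) ^ ((1:ℝ)/2)) 0 :=
        ((continuous_const.sub continuous_id).continuousAt).rpow_const
          (Or.inl (by norm_num))
      have hb : ContinuousAt (fun κ : ℝ =>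
          τ * κ ^ ((1:ℝ)/2) + ξ * (1 - κ) ^ ((1:ℝ)/2)) 0 :=
        ((continuousAt_const.mul h2).add (continuousAt_const.mul h3))
      have hbpos : (0:ℝ) < τ * (0:ℝ) ^ ((1:ℝ)/2) + ξ * (1 - 0) ^ ((1:ℝ)/2) := by
        simp [Real.one_rpow, Real.zero_rpow (by norm_num : ((1:ℝ)/2) ≠ 0)]
        positivity
      have hd : ContinuousAt (fun κ : ℝ =>
          (τ * κ ^ ((1:ℝ)/2) + ξ * (1 - κ) ^ ((1:ℝ)/2)) ^ (1 + 1/ξ)) 0 :=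
        hb.rpow_const (Or.inl (ne_of_gt hbpos))
      have hdne : ((τ * (0:ℝ) ^ ((1:ℝ)/2) + ξ * (1 - 0) ^ ((1:ℝ)/2)) ^ (1 + 1/ξ)) ≠ 0 :=
        ne_of_gt (Real.rpow_pos_of_pos hbpos _)
      exact (continuousAt_const.mul h1).div hd hdne
    have hg0 : 0 < g 0 := by
      have hbase : τ * (0:ℝ) ^ ((1:ℝ)/2) + ξ * (1 - 0) ^ ((1:ℝ)/2) = ξ := by
        simp [Real.one_rpow, Real.zero_rpow (by norm_num : ((1:ℝ)/2) ≠ 0)]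
      rw [hgdef]
      simp only [hbase, sub_zero, Real.one_rpow]
      have h1 : (0:ℝ) < τ ^ (1/ξ) := Real.rpow_pos_of_pos hτ _
      have h2 : (0:ℝ) < ξ ^ (1 + 1/ξ) := Real.rpow_pos_of_pos hξ0 _
      positivity
    have hgt : Tendsto g (𝓝[>] (0:ℝ)) (𝓝 (g 0)) :=
      hcont.tendsto.mono_left nhdsWithin_le_nhds
    have := hgt.pos_mul_atTop hg0 hblow
    refine this.congr fun κ => ?_
    simp only [hgdef, kappaPdf]
    ring
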